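/- Let F be a field with characteristic not 2 and let a, b be nonzero elements of F. The quaternion algebra (a,b/F) (generated by i, j with i² = a, j² = b, ij = -ji) is a division ring if and only if the equation a·x² + b·y² = z² has no solution (x,y,z) ∈ F³ with (x,y,z) ≠ (0,0,0). -/

import Mathlib

open Quaternion

/-- The quaternion algebra `(a,b/F)` over a field `F` of characteristic ≠ 2, with `a b ≠ 0`,
is a division ring iff `a·x² + b·y² = z²` has no nonzero solution in `F³`. -/
theorem quaternionAlgebra_isDivisionRing_iff {F : Type*} [Field F]
    (hF : ringChar F ≠ 2) (a b : F) (ha : a ≠ 0) (hb : b ≠ 0) :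
    (∀ q : ℍ[F, a, b], q ≠ 0 → IsUnit q) ↔
      ¬ ∃ x y z : F, (x, y, z) ≠ (0, 0, 0) ∧ a * x ^ 2 + b * y ^ 2 = z ^ 2 := by
  have h2 : (2 : F) ≠ 0 := Ring.two_ne_zero hF
  constructor
  · rintro hdiv ⟨x, y, z, hne, heq⟩
    set q : ℍ[F, a, b] := ⟨z, x, y, 0⟩ with hqdef
    have hq0 : q ≠ 0 := by
      intro h
      apply hne
      rw [QuaternionAlgebra.ext_iff] at h
      simp only [hqdef, QuaternionAlgebra.re_zero, QuaternionAlgebra.imI_zero,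
        QuaternionAlgebra.imJ_zero, QuaternionAlgebra.imK_zero] at h
      simp [Prod.ext_iff, h.1, h.2.1, h.2.2.1]
    have h0 : q * star q = 0 := by
      rw [hqdef]
      ext <;>
        simp only [QuaternionAlgebra.star_mk, QuaternionAlgebra.mk_mul_mk,
          QuaternionAlgebra.re_zero, QuaternionAlgebra.imI_zero, QuaternionAlgebra.imJ_zero,
          QuaternionAlgebra.imK_zero]
      · linear_combination -heq
      · ring
      · ring
      · ring
    obtain ⟨u, hu⟩ := hdiv q hq0
    have hstar : star q = 0 := by
      calc star q = (↑u⁻¹ * ↑u) * star q := by simp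
        _ = ↑u⁻¹ * (q * star q) := by rw [mul_assoc, hu]
        _ = 0 := by rw [h0, mul_zero]
    apply hq0
    have := congrArg star hstar
    simpa using this
  · intro h q hq
    obtain ⟨w, x, y, z⟩ := q
    set n : F := w ^ 2 - a * x ^ 2 - b * y ^ 2 + a * b * z ^ 2 with hndef
    have hcomp : ¬(w = 0 ∧ x = 0 ∧ y = 0 ∧ z = 0) := by
      intro ⟨h1, h2', h3, h4⟩
      exact hq (by rw [h1, h2', h3, h4]; rfl)
    have hn : n ≠ 0 := by
      intro hn0
      apply h
      by_cases hZ : a * x ^ 2 + b * y ^ 2 = 0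
      · by_cases hxy : x = 0 ∧ y = 0
        · -- then w² + ab z² = 0 with (w,z) ≠ 0
          obtain ⟨hx, hy⟩ := hxy
          have hw : w ^ 2 + a * b * z ^ 2 = 0 := by
            rw [hndef, hx, hy] at hn0; linear_combination hn0
          have hz : z ≠ 0 := by
            intro hz
            rw [hz] at hw
            have : w = 0 := by
              have : w ^ 2 = 0 := by linear_combination hw
              exact pow_eq_zero_iff (n := 2) (by norm_num) |>.mp this
            exact hcomp ⟨this, hx, hy, hz⟩
          have hwne : w ≠ 0 := by
            intro hw0
            rw [hw0] at hw
            have h' : a * (b * z ^ 2) = 0 := by linear_combination hw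
            have h'' := (mul_eq_zero.mp ((mul_eq_zero.mp h').resolve_left ha)).resolve_left hb
            exact hz (pow_eq_zero_iff (n := 2) (by norm_num) |>.mp h'')
          refine ⟨b * (b - 1) * z, (b + 1) * w, 2 * b * w, ?_, ?_⟩
          · intro hc
            rw [Prod.ext_iff, Prod.ext_iff] at hc
            exact (mul_ne_zero (mul_ne_zero h2 hb) hwne) hc.2.2
          · linear_combination b * (b - 1) ^ 2 * hw
        · -- a x² + b y² = 0 with (x,y) ≠ 0 : (x, y, 0) is a solution
          refine ⟨x, y, 0, ?_, by rw [hZ]; ring⟩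
          intro hc
          rw [Prod.ext_iff, Prod.ext_iff] at hc
          exact hxy ⟨hc.1, hc.2.1⟩
      · refine ⟨x * w + b * y * z, y * w - a * x * z, a * x ^ 2 + b * y ^ 2, ?_, ?_⟩
        · intro hc
          rw [Prod.ext_iff, Prod.ext_iff] at hc
          exact hZ hc.2.2
        · linear_combination (a * x ^ 2 + b * y ^ 2) * hn0
    refine ⟨⟨⟨w, x, y, z⟩, (n⁻¹ : F) • star ⟨w, x, y, z⟩, ?_, ?_⟩, rfl⟩ <;>
    · ext <;>
        simp only [QuaternionAlgebra.star_mk, QuaternionAlgebra.smul_mk, smul_eq_mul,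
          QuaternionAlgebra.mk_mul_mk, QuaternionAlgebra.re_one, QuaternionAlgebra.imI_one,
          QuaternionAlgebra.imJ_one, QuaternionAlgebra.imK_one] <;>
        field_simp <;>
        ring
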